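/- Let φ̂, φ̂' ∈ ℝ, ε, ε' ≥ 0 with ε + ε' ≤ π, and define δ = sin(ε) + sin(ε') + 4·sin((ε+ε')/2). Then for all φ, φ' with |φ − φ̂| ≤ ε and |φ' − φ̂'| ≤ ε', the matrix J_φ(φ,φ') − (J_φ(φ̂,φ̂') − δ·I₂) is positive semidefinite, where J_φ(θ,θ') = (q(θ)−q(θ'))(q(θ)−q(θ'))ᵀ with q(θ) = (cosθ, sinθ)ᵀ. -/

import Mathlib

set_option maxHeartbeats 1000000
open Real

section Aux

private lemma sin_abs_le' (z m : ℝ) (h : |z| ≤ m) (hm : m ≤ π/2) : |Real.sin z| ≤ Real.sin m := by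
  have h0 : 0 ≤ m := le_trans (abs_nonneg z) h
  rw [abs_le] at h
  rw [abs_le]
  refine ⟨?_, Real.sin_le_sin_of_le_of_le_pi_div_two (by linarith) hm h.2⟩
  have := Real.sin_le_sin_of_le_of_le_pi_div_two (x := -z) (by linarith) hm (by linarith)
  rw [Real.sin_neg] at this; linarith

private lemma diff_lin' (u0 u1 a b : ℝ) :
    (u0 * cos a + u1 * sin a) - (u0 * cos b + u1 * sin b)
      = 2 * sin ((a-b)/2) * (u1 * cos ((a+b)/2) - u0 * sin ((a+b)/2)) := by
  have ha : a = (a+b)/2 + (a-b)/2 := by ring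
  have hb : b = (a+b)/2 - (a-b)/2 := by ring
  rw [show cos a = cos ((a+b)/2 + (a-b)/2) by rw [← ha],
      show sin a = sin ((a+b)/2 + (a-b)/2) by rw [← ha],
      show cos b = cos ((a+b)/2 - (a-b)/2) by rw [← hb],
      show sin b = sin ((a+b)/2 - (a-b)/2) by rw [← hb],
      cos_add, sin_add, cos_sub, sin_sub]
  ring

private lemma sum_lin' (u0 u1 a b : ℝ) :
    (u0 * cos a + u1 * sin a) + (u0 * cos b + u1 * sin b)
      = 2 * cos ((a-b)/2) * (u0 * cos ((a+b)/2) + u1 * sin ((a+b)/2)) := by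
  have ha : a = (a+b)/2 + (a-b)/2 := by ring
  have hb : b = (a+b)/2 - (a-b)/2 := by ring
  rw [show cos a = cos ((a+b)/2 + (a-b)/2) by rw [← ha],
      show sin a = sin ((a+b)/2 + (a-b)/2) by rw [← ha],
      show cos b = cos ((a+b)/2 - (a-b)/2) by rw [← hb],
      show sin b = sin ((a+b)/2 - (a-b)/2) by rw [← hb],
      cos_add, sin_add, cos_sub, sin_sub]
  ring

private lemma prod_form' (u0 u1 a b : ℝ) :
    (u0 * cos a + u1 * sin a) * (u0 * cos b + u1 * sin b)
      = (cos ((a-b)/2))^2 * (u0 * cos ((a+b)/2) + u1 * sin ((a+b)/2))^2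
        - (sin ((a-b)/2))^2 * (u1 * cos ((a+b)/2) - u0 * sin ((a+b)/2))^2 := by
  have ha : a = (a+b)/2 + (a-b)/2 := by ring
  have hb : b = (a+b)/2 - (a-b)/2 := by ring
  rw [show cos a = cos ((a+b)/2 + (a-b)/2) by rw [← ha],
      show sin a = sin ((a+b)/2 + (a-b)/2) by rw [← ha],
      show cos b = cos ((a+b)/2 - (a-b)/2) by rw [← hb],
      show sin b = sin ((a+b)/2 - (a-b)/2) by rw [← hb],
      cos_add, sin_add, cos_sub, sin_sub]
  ring

private lemma FG_sq' (u0 u1 M : ℝ) :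
    (u0 * cos M + u1 * sin M)^2 + (u1 * cos M - u0 * sin M)^2 = u0^2 + u1^2 := by
  nlinarith [sin_sq_add_cos_sq M]

private lemma sin_sq_sub' (x y : ℝ) : (sin x)^2 - (sin y)^2 = sin (x+y) * sin (x-y) := by
  rw [sin_add, sin_sub]
  linear_combination (sin y)^2 * (sin_sq_add_cos_sq x) - (sin x)^2 * (sin_sq_add_cos_sq y)

private lemma sq_diff_bound' (u0 u1 a b m : ℝ) (h : |Real.sin (a-b)| ≤ m) :
    |(u0 * cos a + u1 * sin a)^2 - (u0 * cos b + u1 * sin b)^2| ≤ (u0^2 + u1^2) * m := by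
  set F := u0 * cos ((a+b)/2) + u1 * sin ((a+b)/2) with hF
  set G := u1 * cos ((a+b)/2) - u0 * sin ((a+b)/2) with hG
  have key : (u0 * cos a + u1 * sin a)^2 - (u0 * cos b + u1 * sin b)^2
      = sin (a-b) * (2 * (F * G)) := by
    have e1 := diff_lin' u0 u1 a b
    have e2 := sum_lin' u0 u1 a b
    have e3 : sin (a-b) = 2 * sin ((a-b)/2) * cos ((a-b)/2) := by
      rw [← Real.sin_two_mul]; ring_nf
    calc (u0 * cos a + u1 * sin a)^2 - (u0 * cos b + u1 * sin b)^2
        = ((u0 * cos a + u1 * sin a) - (u0 * cos b + u1 * sin b))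
          * ((u0 * cos a + u1 * sin a) + (u0 * cos b + u1 * sin b)) := by ring
      _ = (2 * sin ((a-b)/2) * G) * (2 * cos ((a-b)/2) * F) := by rw [e1, e2]
      _ = (2 * sin ((a-b)/2) * cos ((a-b)/2)) * (2 * (F * G)) := by ring
      _ = sin (a-b) * (2 * (F * G)) := by rw [← e3]
  rw [key, abs_mul]
  have hfg : |2 * (F * G)| ≤ u0^2 + u1^2 := by
    have hFGn : F^2 + G^2 = u0^2 + u1^2 := by rw [hF, hG]; exact FG_sq' u0 u1 ((a+b)/2)
    rw [abs_le]
    constructor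
    · nlinarith [sq_nonneg (F + G)]
    · nlinarith [sq_nonneg (F - G)]
  have hm0 : 0 ≤ m := le_trans (abs_nonneg _) h
  calc |sin (a-b)| * |2*(F*G)| ≤ m * (u0^2+u1^2) :=
        mul_le_mul h hfg (abs_nonneg _) hm0
    _ = (u0^2+u1^2) * m := by ring

private lemma key' (A B n D δ : ℝ) (hn : 0 ≤ n) (hD : 0 ≤ D)
    (hA : A^2 ≤ 4*n) (hB : B^2 ≤ 4*n) (hAB : (A-B)^2 ≤ D^2*n)
    (h1 : D ≤ 2 → 4*D - D^2 ≤ δ) (h2 : 2 ≤ D → 4 ≤ δ) :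
    A^2 - B^2 ≤ δ * n := by
  rcases le_or_gt D 2 with hD2 | hD2
  · have hδ := h1 hD2
    rcases le_or_gt ((2-D)^2 * n) (B^2) with hc | hc
    · nlinarith [sq_nonneg B]
    · have h3 : B*(A-B) ≤ (2-D)*D*n := by
        nlinarith [sq_nonneg (B*(A-B) - (2-D)*D*n), sq_nonneg (B*(A-B)),
          mul_nonneg (mul_nonneg (by linarith : (0:ℝ) ≤ 2-D) hD) hn, sq_nonneg B, sq_nonneg (A-B)]
      nlinarith
  · have hδ := h2 hD2.le
    nlinarith [sq_nonneg B]

private lemma ineqI' (s c t d : ℝ) (hs : 0 ≤ s) (hc : 0 ≤ c) (ht : 0 ≤ t) (hd : 0 ≤ d)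
    (hp1 : s^2 + c^2 = 1) (hp2 : t^2 + d^2 = 1) (h1 : s ≤ d) (h2 : t ≤ c)
    (h : 1 ≤ s + t) : 4 ≤ 2*s*c + 2*t*d + 4*(s*d + c*t) := by
  nlinarith [mul_nonneg (sub_nonneg.2 h1) (sub_nonneg.2 h2), sq_nonneg (s+t-1),
    mul_nonneg hs ht, mul_nonneg hc hd, mul_nonneg (sub_nonneg.2 h1) ht,
    mul_nonneg (sub_nonneg.2 h2) hs]

private lemma ineqII' (s c t d : ℝ) (hs : 0 ≤ s) (hc : 0 ≤ c) (ht : 0 ≤ t) (hd : 0 ≤ d)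
    (hp1 : s^2 + c^2 = 1) (hp2 : t^2 + d^2 = 1) (h1 : s ≤ d) (h2 : t ≤ c)
    (hcs : c ≤ s) (h : s + t ≤ 1) :
    8*(s+t) - 4*(s+t)^2 ≤ 2*s*c + 2*t*d + 4*(s*d + c*t) := by
  have hd1 : d ≤ 1 := by nlinarith [sq_nonneg t]
  have hsc : 0 ≤ s - c := by linarith
  have hct : 0 ≤ c - t := by linarith
  have hds : 0 ≤ d - s := by linarith
  have hst1 : 0 ≤ 1 - s - t := by linarith
  have hd1' : 0 ≤ 1 - d := by linarith
  have e1 : s^3 + c^2*s - s = 0 := by linear_combination s * hp1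
  have e2 : s^2*t + c^2*t - t = 0 := by linear_combination t * hp1
  have p1 := mul_nonneg (mul_nonneg hc ht) hsc
  have p2 := mul_nonneg hds hd1'
  have p3 := mul_nonneg hct hd1'
  have p4 := mul_nonneg (mul_nonneg hs ht) hst1
  have p5 := mul_nonneg (mul_nonneg ht ht) ht
  have p7 := mul_nonneg hsc hd1'
  have p8 := mul_nonneg ht hct
  have p9 := mul_nonneg (mul_nonneg hs ht) hsc
  have p10 := mul_nonneg (mul_nonneg hs hc) hst1
  have p11 := mul_nonneg (mul_nonneg hst1 hst1) hst1
  have p12 := mul_nonneg hst1 hd1'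
  have p13 := mul_nonneg hc hsc
  have p14 := mul_nonneg (mul_nonneg hs hc) hsc
  have p15 := mul_nonneg hs (mul_nonneg ht ht)
  linarith [p1,p2,p3,p4,p5,hd1',p7,p8,p9,p10,p11,p12,p13,p14,p15,e1,e2,hp1,hp2]

private lemma caseA' (u0 u1 φh φh' ε ε' φ φ' : ℝ) (hε : 0 ≤ ε) (hε' : 0 ≤ ε')
    (hepi : ε ≤ π/2) (hepi' : ε' ≤ π/2) (hsum : ε + ε' ≤ π)
    (hφ : |φ - φh| ≤ ε) (hφ' : |φ' - φh'| ≤ ε') :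
    ((u0 * cos φh + u1 * sin φh) - (u0 * cos φh' + u1 * sin φh'))^2
      - ((u0 * cos φ + u1 * sin φ) - (u0 * cos φ' + u1 * sin φ'))^2
      ≤ (Real.sin ε + Real.sin ε' + 4 * Real.sin ((ε+ε')/2)) * (u0^2 + u1^2) := by
  set n := u0^2 + u1^2 with hndef
  have hn : 0 ≤ n := by positivity
  set σ := (ε+ε')/2 with hσdef
  have hσ2 : σ ≤ π/2 := by rw [hσdef]; linarith
  have hsσ : 0 ≤ Real.sin σ := Real.sin_nonneg_of_nonneg_of_le_pi (by rw [hσdef]; linarith)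
    (by rw [hσdef]; linarith [Real.pi_pos])
  have hT1 : |(u0 * cos φh + u1 * sin φh)^2 - (u0 * cos φ + u1 * sin φ)^2| ≤ n * Real.sin ε := by
    have h1 : |Real.sin (φh - φ)| ≤ Real.sin ε := by
      apply sin_abs_le' _ _ _ hepi
      rw [abs_sub_comm]; exact hφ
    exact sq_diff_bound' u0 u1 φh φ _ h1
  have hT2 : |(u0 * cos φh' + u1 * sin φh')^2 - (u0 * cos φ' + u1 * sin φ')^2| ≤ n * Real.sin ε' := by
    have h1 : |Real.sin (φh' - φ')| ≤ Real.sin ε' := by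
      apply sin_abs_le' _ _ _ hepi'
      rw [abs_sub_comm]; exact hφ'
    exact sq_diff_bound' u0 u1 φh' φ' _ h1
  set Mh := (φh+φh')/2 with hMh
  set M := (φ+φ')/2 with hM
  set hh := (φh-φh')/2 with hhh
  set hl := (φ-φ')/2 with hhl
  set Fh := u0 * cos Mh + u1 * sin Mh with hFh
  set Gh := u1 * cos Mh - u0 * sin Mh with hGh
  set F := u0 * cos M + u1 * sin M with hF
  set G := u1 * cos M - u0 * sin M with hG
  have eTc : (u0 * cos φh + u1 * sin φh) * (u0 * cos φh' + u1 * sin φh')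
      - (u0 * cos φ + u1 * sin φ) * (u0 * cos φ' + u1 * sin φ')
      = -((sin hh)^2 - (sin hl)^2) * n + (cos hl)^2 * (Fh^2 - F^2) - (sin hl)^2 * (Gh^2 - G^2) := by
    have hFGMh : Fh^2 + Gh^2 = n := by rw [hFh, hGh, hndef]; exact FG_sq' u0 u1 Mh
    rw [prod_form' u0 u1 φh φh', prod_form' u0 u1 φ φ', ← hMh, ← hM, ← hhh, ← hhl,
        ← hFh, ← hGh, ← hF, ← hG]
    linear_combination Fh^2 * (sin_sq_add_cos_sq hh) - Fh^2 * (sin_sq_add_cos_sq hl)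
      + ((sin hh)^2 - (sin hl)^2) * hFGMh
      - 2*(u0^2+u1^2)*((sin hh)^2 - (sin hl)^2) * (sin_sq_add_cos_sq Mh)
  have hφ1 := abs_le.1 hφ
  have hφ2 := abs_le.1 hφ'
  have hu : |(sin hh)^2 - (sin hl)^2| ≤ Real.sin σ := by
    rw [sin_sq_sub']
    have h1 : |Real.sin (hh - hl)| ≤ Real.sin σ := by
      apply sin_abs_le' _ _ _ hσ2
      rw [abs_le, hhh, hhl, hσdef]
      constructor <;> [linarith [hφ1.1, hφ2.2]; linarith [hφ1.2, hφ2.1]]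
    calc |sin (hh+hl) * sin (hh-hl)| = |sin (hh+hl)| * |sin (hh-hl)| := abs_mul _ _
      _ ≤ 1 * Real.sin σ := mul_le_mul (Real.abs_sin_le_one _) h1 (abs_nonneg _) zero_le_one
      _ = Real.sin σ := one_mul _
  have hΔF : |Fh^2 - F^2| ≤ n * Real.sin σ := by
    rw [hFh, hF]
    apply sq_diff_bound'
    apply sin_abs_le' _ _ _ hσ2
    rw [abs_le, hMh, hM, hσdef]
    constructor <;> [linarith [hφ1.2, hφ2.2]; linarith [hφ1.1, hφ2.1]]
  have hΔG : |Gh^2 - G^2| ≤ n * Real.sin σ := by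
    have := sq_diff_bound' u1 (-u0) Mh M (Real.sin σ) (by
      apply sin_abs_le' _ _ _ hσ2
      rw [abs_le, hMh, hM, hσdef]
      constructor <;> [linarith [hφ1.2, hφ2.2]; linarith [hφ1.1, hφ2.1]])
    have e1 : u1 * cos Mh + (-u0) * sin Mh = Gh := by rw [hGh]; ring
    have e2 : u1 * cos M + (-u0) * sin M = G := by rw [hG]; ring
    have e3 : u1^2 + (-u0)^2 = n := by rw [hndef]; ring
    rwa [e1, e2, e3] at this
  have pyth := sin_sq_add_cos_sq hl
  have hsplit : (sin hl)^2 * (n * Real.sin σ) + (cos hl)^2 * (n * Real.sin σ) = n * Real.sin σ := by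
    linear_combination (n * Real.sin σ) * pyth
  have hF' : -((cos hl)^2 * (n * Real.sin σ)) ≤ (cos hl)^2 * (Fh^2 - F^2) := by
    have := (abs_le.1 hΔF).1
    nlinarith [sq_nonneg (cos hl)]
  have hG' : (sin hl)^2 * (Gh^2 - G^2) ≤ (sin hl)^2 * (n * Real.sin σ) := by
    have := (abs_le.1 hΔG).2
    nlinarith [sq_nonneg (sin hl)]
  have hT1' := (abs_le.1 hT1).2
  have hT2' := (abs_le.1 hT2).2
  have hun2 : ((sin hh)^2 - (sin hl)^2) * n ≤ Real.sin σ * n :=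
    mul_le_mul_of_nonneg_right (abs_le.1 hu).2 hn
  linarith [eTc, hsplit, hF', hG', hT1', hT2', hun2]

private lemma caseB' (u0 u1 φh φh' ε ε' φ φ' : ℝ) (hε : 0 ≤ ε) (hε' : 0 ≤ ε')
    (hbig : π/2 < ε) (hsum : ε + ε' ≤ π)
    (hφ : |φ - φh| ≤ ε) (hφ' : |φ' - φh'| ≤ ε') :
    ((u0 * cos φh + u1 * sin φh) - (u0 * cos φh' + u1 * sin φh'))^2
      - ((u0 * cos φ + u1 * sin φ) - (u0 * cos φ' + u1 * sin φ'))^2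
      ≤ (Real.sin ε + Real.sin ε' + 4 * Real.sin ((ε+ε')/2)) * (u0^2 + u1^2) := by
  have hpi := Real.pi_pos
  have hεπ : ε ≤ π := by linarith
  have hε'2 : ε' ≤ π/2 := by linarith
  set s := Real.sin (ε/2) with hsd
  set c := Real.cos (ε/2) with hcd
  set t := Real.sin (ε'/2) with htd
  set d := Real.cos (ε'/2) with hdd
  clear_value s c t d
  have hs : 0 ≤ s := by
    rw [hsd]; exact Real.sin_nonneg_of_nonneg_of_le_pi (by linarith) (by linarith)
  have hc : 0 ≤ c := by
    rw [hcd]; exact Real.cos_nonneg_of_mem_Icc ⟨by linarith, by linarith⟩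
  have ht : 0 ≤ t := by
    rw [htd]; exact Real.sin_nonneg_of_nonneg_of_le_pi (by linarith) (by linarith)
  have hd : 0 ≤ d := by
    rw [hdd]; exact Real.cos_nonneg_of_mem_Icc ⟨by linarith, by linarith⟩
  have hp1 : s^2 + c^2 = 1 := by rw [hsd, hcd]; exact sin_sq_add_cos_sq (ε/2)
  have hp2 : t^2 + d^2 = 1 := by rw [htd, hdd]; exact sin_sq_add_cos_sq (ε'/2)
  have h1 : s ≤ d := by
    have h := Real.sin_le_sin_of_le_of_le_pi_div_two (x := ε/2) (y := π/2 - ε'/2)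
      (by linarith) (by linarith) (by linarith)
    rw [Real.sin_pi_div_two_sub] at h
    rw [hsd, hdd]; exact h
  have h2 : t ≤ c := by
    have h := Real.sin_le_sin_of_le_of_le_pi_div_two (x := ε'/2) (y := π/2 - ε/2)
      (by linarith) (by linarith) (by linarith)
    rw [Real.sin_pi_div_two_sub] at h
    rw [htd, hcd]; exact h
  have hcs : c ≤ s := by
    have h := Real.sin_le_sin_of_le_of_le_pi_div_two (x := π/2 - ε/2) (y := ε/2)
      (by linarith) (by linarith) (by linarith)
    rw [Real.sin_pi_div_two_sub] at h
    rw [hcd, hsd]; exact h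
  have hδ : Real.sin ε + Real.sin ε' + 4 * Real.sin ((ε+ε')/2)
      = 2*s*c + 2*t*d + 4*(s*d + c*t) := by
    rw [show Real.sin ε = 2*s*c by
        rw [hsd, hcd, ← Real.sin_two_mul]; congr 1; ring,
      show Real.sin ε' = 2*t*d by
        rw [htd, hdd, ← Real.sin_two_mul]; congr 1; ring,
      show Real.sin ((ε+ε')/2) = s*d + c*t by
        rw [show (ε+ε')/2 = ε/2 + ε'/2 by ring, Real.sin_add, hsd, hcd, htd, hdd]]
  rw [hδ]
  set n := u0^2 + u1^2 with hndef
  have hn : 0 ≤ n := by positivity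
  clear_value n
  -- quadratic facts
  have habound : ∀ a b : ℝ, ((u0 * cos a + u1 * sin a) - (u0 * cos b + u1 * sin b))^2
      ≤ 4 * ((Real.sin ((a-b)/2))^2 * n) := by
    intro a b
    rw [diff_lin' u0 u1 a b]
    have hG2 : (u1 * cos ((a+b)/2) - u0 * sin ((a+b)/2))^2 ≤ n := by
      have := FG_sq' u0 u1 ((a+b)/2)
      nlinarith [sq_nonneg (u0 * cos ((a+b)/2) + u1 * sin ((a+b)/2))]
    have := mul_le_mul_of_nonneg_left hG2 (sq_nonneg (Real.sin ((a-b)/2)))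
    nlinarith [this]
  have hA : ((u0 * cos φh + u1 * sin φh) - (u0 * cos φh' + u1 * sin φh'))^2 ≤ 4*n := by
    have h0 := habound φh φh'
    have h1 := mul_le_mul_of_nonneg_right (sin_sq_le_one ((φh-φh')/2)) hn
    linarith
  have hB : ((u0 * cos φ + u1 * sin φ) - (u0 * cos φ' + u1 * sin φ'))^2 ≤ 4*n := by
    have h0 := habound φ φ'
    have h1 := mul_le_mul_of_nonneg_right (sin_sq_le_one ((φ-φ')/2)) hn
    linarith
  -- (A-B)^2 ≤ D^2 n
  have hP : ((u0 * cos φh + u1 * sin φh) - (u0 * cos φ + u1 * sin φ))^2 ≤ 4*(s^2*n) := by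
    have := habound φh φ
    have hsin : |Real.sin ((φh-φ)/2)| ≤ s := by
      rw [hsd]
      apply sin_abs_le' _ _ _ (by linarith)
      rw [abs_div, abs_of_pos (by norm_num : (0:ℝ) < 2)]
      rw [abs_sub_comm] at hφ
      calc |φh - φ|/2 ≤ ε/2 := by linarith [hφ]
        _ = ε/2 := rfl
    have h2 : (Real.sin ((φh-φ)/2))^2 ≤ s^2 := by
      have := abs_le.1 hsin; nlinarith
    have h3 := mul_le_mul_of_nonneg_right h2 hn
    linarith
  have hQ : ((u0 * cos φh' + u1 * sin φh') - (u0 * cos φ' + u1 * sin φ'))^2 ≤ 4*(t^2*n) := by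
    have := habound φh' φ'
    have hsin : |Real.sin ((φh'-φ')/2)| ≤ t := by
      rw [htd]
      apply sin_abs_le' _ _ _ (by linarith)
      rw [abs_div, abs_of_pos (by norm_num : (0:ℝ) < 2)]
      rw [abs_sub_comm] at hφ'
      linarith [hφ']
    have h2 : (Real.sin ((φh'-φ')/2))^2 ≤ t^2 := by
      have := abs_le.1 hsin; nlinarith
    have h3 := mul_le_mul_of_nonneg_right h2 hn
    linarith
  set P := (u0 * cos φh + u1 * sin φh) - (u0 * cos φ + u1 * sin φ) with hPd
  set Q := (u0 * cos φh' + u1 * sin φh') - (u0 * cos φ' + u1 * sin φ') with hQd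
  clear_value P Q
  have hPQ : -(4*(s*t*n)) ≤ P*Q := by
    have hsq : (P*Q)^2 ≤ (4*(s*t*n))^2 := by
      calc (P*Q)^2 = P^2 * Q^2 := by ring
        _ ≤ (4*(s^2*n)) * (4*(t^2*n)) := by
            apply mul_le_mul hP hQ (sq_nonneg _) (by positivity)
        _ = (4*(s*t*n))^2 := by ring
    nlinarith [mul_nonneg (mul_nonneg hs ht) hn, sq_nonneg (P*Q + 4*(s*t*n))]
  have hAB : ((u0 * cos φh + u1 * sin φh) - (u0 * cos φh' + u1 * sin φh')
      - ((u0 * cos φ + u1 * sin φ) - (u0 * cos φ' + u1 * sin φ')))^2 ≤ (2*s+2*t)^2*n := by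
    have e : (u0 * cos φh + u1 * sin φh) - (u0 * cos φh' + u1 * sin φh')
      - ((u0 * cos φ + u1 * sin φ) - (u0 * cos φ' + u1 * sin φ')) = P - Q := by
      rw [hPd, hQd]; ring
    rw [e]
    nlinarith [hP, hQ, hPQ, sq_nonneg (P-Q)]
  exact key' _ _ n (2*s+2*t) _ hn (by linarith) hA hB hAB
    (fun hD2 => by
      have := ineqII' s c t d hs hc ht hd hp1 hp2 h1 h2 hcs (by linarith)
      linarith)
    (fun hD2 => ineqI' s c t d hs hc ht hd hp1 hp2 h1 h2 (by linarith))

private lemma scalar_main' (u0 u1 φh φh' ε ε' φ φ' : ℝ) (hε : 0 ≤ ε) (hε' : 0 ≤ ε')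
    (hsum : ε + ε' ≤ π) (hφ : |φ - φh| ≤ ε) (hφ' : |φ' - φh'| ≤ ε') :
    ((u0 * cos φh + u1 * sin φh) - (u0 * cos φh' + u1 * sin φh'))^2
      - ((u0 * cos φ + u1 * sin φ) - (u0 * cos φ' + u1 * sin φ'))^2
      ≤ (Real.sin ε + Real.sin ε' + 4 * Real.sin ((ε+ε')/2)) * (u0^2 + u1^2) := by
  rcases le_or_gt ε (π/2) with h1 | h1
  · rcases le_or_gt ε' (π/2) with h2 | h2
    · exact caseA' u0 u1 φh φh' ε ε' φ φ' hε hε' h1 h2 hsum hφ hφ'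
    · have := caseB' u0 u1 φh' φh ε' ε φ' φ hε' hε h2 (by linarith) hφ' hφ
      rw [show (ε'+ε)/2 = (ε+ε')/2 by ring] at this
      linarith [this]
  · exact caseB' u0 u1 φh φh' ε ε' φ φ' hε hε' h1 hsum hφ hφ'

end Aux

open Matrix

theorem stmt_9 (φh φh' ε ε' : ℝ) (hε : 0 ≤ ε) (hε' : 0 ≤ ε') (hsum : ε + ε' ≤ π)
    (φ φ' : ℝ) (hφ : |φ - φh| ≤ ε) (hφ' : |φ' - φh'| ≤ ε') :
    let q : ℝ → Fin 2 → ℝ := fun θ => ![Real.cos θ, Real.sin θ]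
    let Jpair : ℝ → ℝ → Matrix (Fin 2) (Fin 2) ℝ := fun θ θ' =>
      Matrix.vecMulVec (q θ - q θ') (q θ - q θ')
    let δ : ℝ := Real.sin ε + Real.sin ε' + 4 * Real.sin ((ε + ε') / 2)
    (Jpair φ φ' - (Jpair φh φh' - δ • (1 : Matrix (Fin 2) (Fin 2) ℝ))).PosSemidef := by
  intro q Jpair δ
  rw [Matrix.posSemidef_iff_dotProduct_mulVec]
  constructor
  · -- Hermitian
    ext i j
    fin_cases i <;> fin_cases j <;>
      simp [Jpair, q, Matrix.vecMulVec_apply, Matrix.conjTranspose_apply, Matrix.sub_apply,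
        Matrix.smul_apply, Matrix.one_apply] <;> ring
  · intro x
    have key := scalar_main' (x 0) (x 1) φh φh' ε ε' φ φ' hε hε' hsum hφ hφ'
    simp only [Jpair, q, δ, dotProduct, Matrix.mulVec, Fin.sum_univ_two,
      Matrix.sub_apply, Matrix.smul_apply, Matrix.one_apply, Matrix.vecMulVec_apply,
      Pi.sub_apply, Matrix.cons_val_zero, Matrix.cons_val_one, Matrix.head_cons,
      star_trivial, smul_eq_mul]
    norm_num
    nlinarith [key]
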